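/- Let T be a symmetric bilinear form on Minkowski space ℝ^{1,3} with metric η = diag(-1,1,1,1). Then the following are equivalent: (a) for every future-directed causal vector V, the vector j with j^μ = -T^μ_ν V^ν satisfies η(j,j) ≤ 0 and η(j,V) ≤ 0; (b) in every orthonormal basis (e₀,e₁,e₂,e₃) with e₀ future-directed timelike, the components satisfy T₀₀ ≥ √(T₀₁² + T₀₂² + T₀₃²). -/

import Mathlib

set_option maxHeartbeats 1000000


open Matrix

/-- The Minkowski metric `η = diag(-1,1,1,1)` on `ℝ⁴`. -/
noncomputable def minkMatrix : Matrix (Fin 4) (Fin 4) ℝ :=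
  Matrix.diagonal ![(-1 : ℝ), 1, 1, 1]

/-- The Minkowski bilinear form `η(x,y) = -x⁰y⁰ + x¹y¹ + x²y² + x³y³`. -/
noncomputable def minkBilin (x y : Fin 4 → ℝ) : ℝ :=
  x ⬝ᵥ minkMatrix.mulVec y

lemma mink_expand (x y : Fin 4 → ℝ) :
    minkBilin x y = -(x 0 * y 0) + x 1 * y 1 + x 2 * y 2 + x 3 * y 3 := by
  simp [minkBilin, minkMatrix, Matrix.mulVec, dotProduct, Fin.sum_univ_four,
    Matrix.diagonal, Matrix.of_apply]

lemma dot4 (x y : Fin 4 → ℝ) : x ⬝ᵥ y = x 0 * y 0 + x 1 * y 1 + x 2 * y 2 + x 3 * y 3 := by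
  simp [dotProduct, Fin.sum_univ_four]

lemma mv4 (M : Matrix (Fin 4) (Fin 4) ℝ) (v : Fin 4 → ℝ) (i : Fin 4) :
    M.mulVec v i = M i 0 * v 0 + M i 1 * v 1 + M i 2 * v 2 + M i 3 * v 3 := by
  simp [Matrix.mulVec, dotProduct, Fin.sum_univ_four]

lemma etaeta : minkMatrix * minkMatrix = 1 := by
  simp [minkMatrix, Matrix.diagonal_mul_diagonal]
  ext i
  fin_cases i <;> simp [Matrix.diagonal, Matrix.one_apply]

lemma eta_mulVec (w : Fin 4 → ℝ) (i : Fin 4) :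
    minkMatrix.mulVec w i = ![-w 0, w 1, w 2, w 3] i := by
  fin_cases i <;>
    simp [minkMatrix, Matrix.mulVec, dotProduct, Fin.sum_univ_four,
      Matrix.diagonal, Matrix.of_apply]

/-- `η(j,j) = η(Tv, Tv)` for `j = -ηTv`. -/
lemma jj_eq (T : Matrix (Fin 4) (Fin 4) ℝ) (V : Fin 4 → ℝ) :
    minkBilin (fun μ => -((minkMatrix * T).mulVec V μ))
      (fun μ => -((minkMatrix * T).mulVec V μ))
      = minkBilin (T.mulVec V) (T.mulVec V) := by
  have h : ∀ μ, (minkMatrix * T).mulVec V μ = minkMatrix.mulVec (T.mulVec V) μ := by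
    intro μ; rw [← Matrix.mulVec_mulVec]
  rw [mink_expand, mink_expand]
  simp only [h, eta_mulVec]
  simp
  try ring

/-- `η(j,V) = -(V ⬝ T V)` for `j = -ηTV`. -/
lemma jV_eq (T : Matrix (Fin 4) (Fin 4) ℝ) (V : Fin 4 → ℝ) :
    minkBilin (fun μ => -((minkMatrix * T).mulVec V μ)) V = -(V ⬝ᵥ T.mulVec V) := by
  have h : ∀ μ, (minkMatrix * T).mulVec V μ = minkMatrix.mulVec (T.mulVec V) μ := by
    intro μ; rw [← Matrix.mulVec_mulVec]
  rw [mink_expand, dot4]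
  simp only [h, eta_mulVec]
  simp only [mv4]
  simp
  try ring

lemma symm_dot (T : Matrix (Fin 4) (Fin 4) ℝ) (hT : T.IsSymm) (x y : Fin 4 → ℝ) :
    x ⬝ᵥ T.mulVec y = y ⬝ᵥ T.mulVec x := by
  have hs : ∀ i j, T i j = T j i := fun i j => by
    simpa using congrFun (congrFun hT j) i
  rw [dot4, dot4]
  simp only [mv4]
  linear_combination (x 0 * y 1 - x 1 * y 0) * hs 0 1 + (x 0 * y 2 - x 2 * y 0) * hs 0 2
    + (x 0 * y 3 - x 3 * y 0) * hs 0 3 + (x 1 * y 2 - x 2 * y 1) * hs 1 2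
    + (x 1 * y 3 - x 3 * y 1) * hs 1 3 + (x 2 * y 3 - x 3 * y 2) * hs 2 3

/-- completeness relation for a Lorentz-orthonormal frame -/
lemma completeness (e : Fin 4 → Fin 4 → ℝ)
    (he : ∀ α β, minkBilin (e α) (e β) = minkMatrix α β) (w : Fin 4 → ℝ) :
    minkBilin w w = -(e 0 ⬝ᵥ w) ^ 2 + (e 1 ⬝ᵥ w) ^ 2 + (e 2 ⬝ᵥ w) ^ 2 + (e 3 ⬝ᵥ w) ^ 2 := by
  set E : Matrix (Fin 4) (Fin 4) ℝ := Matrix.of (fun μ α => e α μ) with hEdef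
  have hE : Eᵀ * minkMatrix * E = minkMatrix := by
    ext α β
    have h := he α β
    simp only [mink_expand] at h
    simp only [Matrix.mul_apply, Fin.sum_univ_four, hEdef, Matrix.of_apply,
      Matrix.transpose_apply]
    fin_cases α <;> fin_cases β <;>
      simp_all [minkMatrix, Matrix.diagonal_apply]
  have hleft : (minkMatrix * Eᵀ * minkMatrix) * E = 1 := by
    calc (minkMatrix * Eᵀ * minkMatrix) * E = minkMatrix * (Eᵀ * minkMatrix * E) := by
          noncomm_ring
      _ = minkMatrix * minkMatrix := by rw [hE]
      _ = 1 := etaeta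
  have hright : E * (minkMatrix * Eᵀ * minkMatrix) = 1 := mul_eq_one_comm.mp hleft
  have hEE : E * minkMatrix * Eᵀ = minkMatrix := by
    calc E * minkMatrix * Eᵀ = E * (minkMatrix * Eᵀ * minkMatrix) * minkMatrix := by
          have h2 : minkMatrix * minkMatrix = 1 := etaeta
          calc E * minkMatrix * Eᵀ = E * minkMatrix * Eᵀ * (minkMatrix * minkMatrix) := by
                rw [h2, Matrix.mul_one]
            _ = E * (minkMatrix * Eᵀ * minkMatrix) * minkMatrix := by noncomm_ring
      _ = 1 * minkMatrix := by rw [hright]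
      _ = minkMatrix := Matrix.one_mul _
  have h1 : minkBilin w w = w ⬝ᵥ (E * minkMatrix * Eᵀ).mulVec w := by
    rw [hEE]; rfl
  have h2 : w ⬝ᵥ (E * minkMatrix * Eᵀ).mulVec w
      = (Eᵀ.mulVec w) ⬝ᵥ minkMatrix.mulVec (Eᵀ.mulVec w) := by
    rw [← Matrix.mulVec_mulVec, ← Matrix.mulVec_mulVec, Matrix.dotProduct_mulVec]
    congr 1
    funext α
    simp [Matrix.vecMul, Matrix.mulVec, dotProduct, hEdef, Matrix.transpose_apply,
      mul_comm]
  have hz : ∀ α, Eᵀ.mulVec w α = e α ⬝ᵥ w := by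
    intro α
    simp [Matrix.mulVec, dotProduct, hEdef, Matrix.transpose_apply, mul_comm]
  rw [h1, h2]
  have h3 : (Eᵀ.mulVec w) ⬝ᵥ minkMatrix.mulVec (Eᵀ.mulVec w)
      = minkBilin (Eᵀ.mulVec w) (Eᵀ.mulVec w) := rfl
  rw [h3, mink_expand, hz, hz, hz, hz]
  ring

/-- the boost frame adapted to a unit timelike vector `u` -/
noncomputable def bb (u : Fin 4 → ℝ) : Fin 4 → Fin 4 → ℝ :=
  ![u,
    ![u 1, 1 + u 1 * u 1 / (1 + u 0), u 2 * u 1 / (1 + u 0), u 3 * u 1 / (1 + u 0)],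
    ![u 2, u 1 * u 2 / (1 + u 0), 1 + u 2 * u 2 / (1 + u 0), u 3 * u 2 / (1 + u 0)],
    ![u 3, u 1 * u 3 / (1 + u 0), u 2 * u 3 / (1 + u 0), 1 + u 3 * u 3 / (1 + u 0)]]

lemma bb_orthonormal (u : Fin 4 → ℝ) (hu0 : 0 < u 0)
    (huu : minkBilin u u = -1) :
    ∀ α β, minkBilin (bb u α) (bb u β) = minkMatrix α β := by
  rw [mink_expand] at huu
  have h1 : u 0 ^ 2 = 1 + u 1 ^ 2 + u 2 ^ 2 + u 3 ^ 2 := by nlinarith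
  have hpos : (0:ℝ) < 1 + u 0 := by positivity
  have hne : (1 + u 0) ≠ 0 := ne_of_gt hpos
  have hd : (1 + u 0)⁻¹ * (1 + u 0) = 1 := inv_mul_cancel₀ hne
  intro α β
  fin_cases α <;> fin_cases β <;> rw [mink_expand] <;>
    simp [bb, minkMatrix, Matrix.diagonal_apply]
  · linear_combination -h1
  · linear_combination (-(u 1) * (1+u 0)⁻¹) * h1 + (u 1 * (u 0 - 1)) * hd
  · linear_combination (-(u 2) * (1+u 0)⁻¹) * h1 + (u 2 * (u 0 - 1)) * hd
  · linear_combination (-(u 3) * (1+u 0)⁻¹) * h1 + (u 3 * (u 0 - 1)) * hd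
  · linear_combination (-(u 1) * (1+u 0)⁻¹) * h1 + (u 1 * (u 0 - 1)) * hd
  · linear_combination (-(u 1 * u 1) * ((1+u 0)⁻¹)^2) * h1
      + (u 1 * u 1 * (1 + (u 0 - 1)*(1+u 0)⁻¹)) * hd
  · linear_combination (-(u 1 * u 2) * ((1+u 0)⁻¹)^2) * h1
      + (u 1 * u 2 * (1 + (u 0 - 1)*(1+u 0)⁻¹)) * hd
  · linear_combination (-(u 1 * u 3) * ((1+u 0)⁻¹)^2) * h1
      + (u 1 * u 3 * (1 + (u 0 - 1)*(1+u 0)⁻¹)) * hd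
  · linear_combination (-(u 2) * (1+u 0)⁻¹) * h1 + (u 2 * (u 0 - 1)) * hd
  · linear_combination (-(u 1 * u 2) * ((1+u 0)⁻¹)^2) * h1
      + (u 1 * u 2 * (1 + (u 0 - 1)*(1+u 0)⁻¹)) * hd
  · linear_combination (-(u 2 * u 2) * ((1+u 0)⁻¹)^2) * h1
      + (u 2 * u 2 * (1 + (u 0 - 1)*(1+u 0)⁻¹)) * hd
  · linear_combination (-(u 2 * u 3) * ((1+u 0)⁻¹)^2) * h1
      + (u 2 * u 3 * (1 + (u 0 - 1)*(1+u 0)⁻¹)) * hd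
  · linear_combination (-(u 3) * (1+u 0)⁻¹) * h1 + (u 3 * (u 0 - 1)) * hd
  · linear_combination (-(u 1 * u 3) * ((1+u 0)⁻¹)^2) * h1
      + (u 1 * u 3 * (1 + (u 0 - 1)*(1+u 0)⁻¹)) * hd
  · linear_combination (-(u 2 * u 3) * ((1+u 0)⁻¹)^2) * h1
      + (u 2 * u 3 * (1 + (u 0 - 1)*(1+u 0)⁻¹)) * hd
  · linear_combination (-(u 3 * u 3) * ((1+u 0)⁻¹)^2) * h1
      + (u 3 * u 3 * (1 + (u 0 - 1)*(1+u 0)⁻¹)) * hd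

lemma poly_nonpos (a b c : ℝ) (h : ∀ t : ℝ, 0 < t → a + b * t + c * t ^ 2 ≤ 0) :
    a ≤ 0 := by
  by_contra ha
  push_neg at ha
  set M := |b| + |c| + 1 with hM
  have hM0 : 0 < M := by positivity
  have ht0 : 0 < min 1 (a / (4 * M)) := lt_min one_pos (by positivity)
  have hle := h _ ht0
  set t := min 1 (a / (4 * M)) with htdef
  have h1 : t ≤ 1 := min_le_left _ _
  have h2 : t ≤ a / (4 * M) := min_le_right _ _
  have h2' : M * t ≤ a / 4 := by
    have := mul_le_mul_of_nonneg_left h2 hM0.le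
    calc M * t ≤ M * (a / (4 * M)) := this
      _ = a / 4 := by field_simp
  have hb' : -|b| ≤ b := neg_abs_le b
  have hc' : -|c| ≤ c := neg_abs_le c
  nlinarith [mul_nonneg (sub_nonneg.mpr h1) ht0.le, abs_nonneg b, abs_nonneg c,
    mul_le_mul_of_nonneg_right hb' ht0.le, mul_nonneg (abs_nonneg c) (mul_nonneg ht0.le ht0.le),
    mul_nonneg (mul_nonneg (abs_nonneg c) ht0.le) (sub_nonneg.mpr h1)]

lemma unit_case (T : Matrix (Fin 4) (Fin 4) ℝ) (hT : T.IsSymm)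
    (hb : ∀ e : Fin 4 → Fin 4 → ℝ,
        (∀ α β, minkBilin (e α) (e β) = minkMatrix α β) → 0 < e 0 0 →
        Real.sqrt ((e 0 ⬝ᵥ T.mulVec (e 1)) ^ 2 + (e 0 ⬝ᵥ T.mulVec (e 2)) ^ 2
            + (e 0 ⬝ᵥ T.mulVec (e 3)) ^ 2)
          ≤ e 0 ⬝ᵥ T.mulVec (e 0))
    (u : Fin 4 → ℝ) (hu0 : 0 < u 0) (huu : minkBilin u u = -1) :
    minkBilin (T.mulVec u) (T.mulVec u) ≤ 0 ∧ 0 ≤ u ⬝ᵥ T.mulVec u := by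
  have hon := bb_orthonormal u hu0 huu
  have hbb0 : bb u 0 = u := rfl
  have h := hb (bb u) hon (by rw [hbb0]; exact hu0)
  rw [hbb0] at h
  have hS : (0:ℝ) ≤ (u ⬝ᵥ T.mulVec (bb u 1)) ^ 2 + (u ⬝ᵥ T.mulVec (bb u 2)) ^ 2
      + (u ⬝ᵥ T.mulVec (bb u 3)) ^ 2 := by positivity
  have hA0 : 0 ≤ u ⬝ᵥ T.mulVec u := le_trans (Real.sqrt_nonneg _) h
  have hsq : (u ⬝ᵥ T.mulVec (bb u 1)) ^ 2 + (u ⬝ᵥ T.mulVec (bb u 2)) ^ 2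
      + (u ⬝ᵥ T.mulVec (bb u 3)) ^ 2 ≤ (u ⬝ᵥ T.mulVec u) ^ 2 := by
    calc _ = Real.sqrt ((u ⬝ᵥ T.mulVec (bb u 1)) ^ 2 + (u ⬝ᵥ T.mulVec (bb u 2)) ^ 2
        + (u ⬝ᵥ T.mulVec (bb u 3)) ^ 2) ^ 2 := (Real.sq_sqrt hS).symm
      _ ≤ (u ⬝ᵥ T.mulVec u) ^ 2 := pow_le_pow_left₀ (Real.sqrt_nonneg _) h 2
  refine ⟨?_, hA0⟩
  have hc := completeness (bb u) hon (T.mulVec u)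
  rw [hbb0] at hc
  rw [hc]
  have hsd : ∀ i, bb u i ⬝ᵥ T.mulVec u = u ⬝ᵥ T.mulVec (bb u i) := fun i => symm_dot T hT _ _
  rw [hsd 1, hsd 2, hsd 3]
  linarith [hsq]

/-- For a symmetric bilinear form `T` on Minkowski space, the Dominant Energy
Condition (for every future-directed causal `V`, the vector `j^μ = -T^μ_ν V^ν` satisfies
`η(j,j) ≤ 0` and `η(j,V) ≤ 0`) is equivalent to: in every orthonormal basis `(e₀,e₁,e₂,e₃)`
with `e₀` future-directed, `T₀₀ ≥ √(T₀₁² + T₀₂² + T₀₃²)`. -/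
theorem stmt_1 (T : Matrix (Fin 4) (Fin 4) ℝ) (hT : T.IsSymm) :
    (∀ V : Fin 4 → ℝ, minkBilin V V ≤ 0 → 0 < V 0 →
        minkBilin (fun μ => -((minkMatrix * T).mulVec V μ))
            (fun μ => -((minkMatrix * T).mulVec V μ)) ≤ 0 ∧
        minkBilin (fun μ => -((minkMatrix * T).mulVec V μ)) V ≤ 0)
    ↔
    (∀ e : Fin 4 → Fin 4 → ℝ,
        (∀ α β, minkBilin (e α) (e β) = minkMatrix α β) → 0 < e 0 0 →
        Real.sqrt ((e 0 ⬝ᵥ T.mulVec (e 1)) ^ 2 + (e 0 ⬝ᵥ T.mulVec (e 2)) ^ 2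
            + (e 0 ⬝ᵥ T.mulVec (e 3)) ^ 2)
          ≤ e 0 ⬝ᵥ T.mulVec (e 0)) := by
  constructor
  · -- (a) → (b)
    intro h e he he0
    have hcaus : minkBilin (e 0) (e 0) ≤ 0 := by
      rw [he 0 0]
      simp [minkMatrix, Matrix.diagonal_apply]
    obtain ⟨hjj, hjV⟩ := h (e 0) hcaus he0
    rw [jj_eq] at hjj
    rw [jV_eq] at hjV
    have hA0 : 0 ≤ e 0 ⬝ᵥ T.mulVec (e 0) := by linarith
    have hc := completeness e he (T.mulVec (e 0))
    rw [hc] at hjj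
    rw [symm_dot T hT (e 1) (e 0), symm_dot T hT (e 2) (e 0),
      symm_dot T hT (e 3) (e 0)] at hjj
    have hle : (e 0 ⬝ᵥ T.mulVec (e 1)) ^ 2 + (e 0 ⬝ᵥ T.mulVec (e 2)) ^ 2
        + (e 0 ⬝ᵥ T.mulVec (e 3)) ^ 2 ≤ (e 0 ⬝ᵥ T.mulVec (e 0)) ^ 2 := by linarith
    calc Real.sqrt ((e 0 ⬝ᵥ T.mulVec (e 1)) ^ 2 + (e 0 ⬝ᵥ T.mulVec (e 2)) ^ 2
        + (e 0 ⬝ᵥ T.mulVec (e 3)) ^ 2)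
        ≤ Real.sqrt ((e 0 ⬝ᵥ T.mulVec (e 0)) ^ 2) := Real.sqrt_le_sqrt hle
      _ = e 0 ⬝ᵥ T.mulVec (e 0) := Real.sqrt_sq hA0
  · -- (b) → (a)
    intro hb V hVV hV0
    -- timelike case
    have timelike : ∀ W : Fin 4 → ℝ, minkBilin W W < 0 → 0 < W 0 →
        minkBilin (T.mulVec W) (T.mulVec W) ≤ 0 ∧ 0 ≤ W ⬝ᵥ T.mulVec W := by
      intro W hW hW0
      set l := Real.sqrt (-minkBilin W W) with hl
      have hl0 : 0 < l := Real.sqrt_pos.mpr (by linarith)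
      have hll : l ^ 2 = -minkBilin W W := Real.sq_sqrt (by linarith)
      set u : Fin 4 → ℝ := fun i => W i / l with hu
      have hu0 : 0 < u 0 := div_pos hW0 hl0
      have hlne : l ≠ 0 := ne_of_gt hl0
      have huu : minkBilin u u = -1 := by
        have hq : minkBilin u u = minkBilin W W / l ^ 2 := by
          rw [mink_expand, mink_expand]
          simp only [hu]
          field_simp
        have hw : minkBilin W W = -l ^ 2 := by linarith [hll]
        rw [hq, hw]
        field_simp
      obtain ⟨q1, q2⟩ := unit_case T hT hb u hu0 huu
      have hWe : W = fun i => l * u i := by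
        funext i
        simp only [hu]
        field_simp
      constructor
      · rw [hWe]
        have hid : minkBilin (T.mulVec fun i => l * u i) (T.mulVec fun i => l * u i)
            = l ^ 2 * minkBilin (T.mulVec u) (T.mulVec u) := by
          rw [mink_expand, mink_expand]
          simp only [mv4]
          ring
        rw [hid]
        nlinarith [sq_nonneg l, q1]
      · rw [hWe]
        have hid : (fun i => l * u i) ⬝ᵥ T.mulVec (fun i => l * u i)
            = l ^ 2 * (u ⬝ᵥ T.mulVec u) := by
          rw [dot4, dot4]
          simp only [mv4]
          ring
        rw [hid]
        exact mul_nonneg (sq_nonneg l) q2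
    -- general causal case by a limiting (polynomial) argument
    have hVVe := hVV
    rw [mink_expand] at hVVe
    set d0 : Fin 4 → ℝ := ![1, 0, 0, 0] with hd0
    have hWt : ∀ t : ℝ, 0 < t →
        minkBilin (T.mulVec ![V 0 + t, V 1, V 2, V 3]) (T.mulVec ![V 0 + t, V 1, V 2, V 3]) ≤ 0
        ∧ 0 ≤ (![V 0 + t, V 1, V 2, V 3] : Fin 4 → ℝ) ⬝ᵥ T.mulVec ![V 0 + t, V 1, V 2, V 3] := by
      intro t ht
      apply timelike
      · rw [mink_expand]
        simp
        nlinarith [hVVe, hV0, ht]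
      · simp
        linarith
    rw [jj_eq, jV_eq]
    constructor
    · apply poly_nonpos _ (2 * minkBilin (T.mulVec V) (T.mulVec d0))
        (minkBilin (T.mulVec d0) (T.mulVec d0))
      intro t ht
      have hp := (hWt t ht).1
      have hid : minkBilin (T.mulVec V) (T.mulVec V)
          + 2 * minkBilin (T.mulVec V) (T.mulVec d0) * t
          + minkBilin (T.mulVec d0) (T.mulVec d0) * t ^ 2
          = minkBilin (T.mulVec ![V 0 + t, V 1, V 2, V 3])
              (T.mulVec ![V 0 + t, V 1, V 2, V 3]) := by
        rw [mink_expand, mink_expand, mink_expand, mink_expand]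
        simp only [mv4, hd0]
        simp
        ring
      rw [hid]
      exact hp
    · apply poly_nonpos _ (-(V ⬝ᵥ T.mulVec d0 + d0 ⬝ᵥ T.mulVec V)) (-(d0 ⬝ᵥ T.mulVec d0))
      intro t ht
      have hp := (hWt t ht).2
      have hid : -(V ⬝ᵥ T.mulVec V) + -(V ⬝ᵥ T.mulVec d0 + d0 ⬝ᵥ T.mulVec V) * t
          + -(d0 ⬝ᵥ T.mulVec d0) * t ^ 2
          = -((![V 0 + t, V 1, V 2, V 3] : Fin 4 → ℝ) ⬝ᵥ T.mulVec ![V 0 + t, V 1, V 2, V 3]) := by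
        rw [dot4, dot4, dot4, dot4, dot4]
        simp only [mv4, hd0]
        simp
        ring
      rw [hid]
      linarith
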